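/- arXiv:2201.00219 — 5 statements merged into one kernel-verified Lean document; each statement's English description precedes it below -/
import Mathlib

section
/- For every fixed real a with 0 ≤ a < 1, lim_{n→∞} ( 2n · ∫_0^∞ r · exp{ n(-r² + log(a + r²)) } dr ) / ( √(2πn) · e^{n(a-1)} ) = 1. -/
open MeasureTheory Filter

namespace LaplaceAux

open MeasureTheory Filter Set Real Nat

lemma integrableOn_pow_exp (n : ℕ) {c : ℝ} (hc : 0 < c) :
    IntegrableOn (fun v : ℝ => v ^ n * Real.exp (-(c * v))) (Set.Ioi 0) := by
  have h := integrableOn_rpow_mul_exp_neg_mul_rpow (p := 1) (s := (n : ℝ)) (b := c)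
    (neg_one_lt_zero.trans_le (Nat.cast_nonneg n)) one_pos hc
  refine h.congr_fun (fun x hx => ?_) measurableSet_Ioi
  dsimp only
  rw [Real.rpow_natCast, Real.rpow_one, neg_mul]

lemma int_pow_exp (n : ℕ) {c : ℝ} (hc : 0 < c) :
    (∫ v in Set.Ioi (0:ℝ), v ^ n * Real.exp (-(c * v))) = (n ! : ℝ) / c ^ (n + 1) := by
  have h := Real.integral_rpow_mul_exp_neg_mul_Ioi (a := (n : ℝ) + 1) (r := c)
    (by positivity) hc
  rw [show ((n : ℝ) + 1 - 1) = (n : ℝ) by ring] at h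
  simp_rw [Real.rpow_natCast] at h
  rw [h, Real.Gamma_nat_eq_factorial,
    show ((n : ℝ) + 1) = ((n + 1 : ℕ) : ℝ) by push_cast; ring,
    Real.rpow_natCast, one_div, inv_pow]
  field_simp

lemma integrableOn_pow_exp_sq (k : ℕ) :
    IntegrableOn (fun r : ℝ => r ^ k * Real.exp (-(r ^ 2))) (Set.Ioi 0) := by
  have h := integrableOn_rpow_mul_exp_neg_mul_sq (b := (1:ℝ)) one_pos (s := (k : ℝ)) (neg_one_lt_zero.trans_le (Nat.cast_nonneg k))
  refine h.congr_fun (fun x hx => ?_) measurableSet_Ioi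
  dsimp only
  rw [Real.rpow_natCast, neg_mul, one_mul]



lemma key_ineq {n : ℕ} (hn : 1 ≤ n) {a r : ℝ} (ha0 : 0 ≤ a) (hr : 0 ≤ r) :
    (a + r ^ 2) ^ n * Real.exp (-((n : ℝ) * r ^ 2)) ≤
      Real.exp (a - 1) ^ (n - 1) * ((a + r ^ 2) * Real.exp (-(r ^ 2))) := by
  have h0 : (0:ℝ) ≤ (a + r ^ 2) * Real.exp (-(r ^ 2)) := by positivity
  have h1 : (a + r ^ 2) * Real.exp (-(r ^ 2)) ≤ Real.exp (a - 1) := by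
    have h := Real.add_one_le_exp (a + r ^ 2 - 1)
    calc (a + r ^ 2) * Real.exp (-(r ^ 2))
        ≤ Real.exp (a + r ^ 2 - 1) * Real.exp (-(r ^ 2)) := by
          exact mul_le_mul_of_nonneg_right (by linarith) (Real.exp_pos _).le
      _ = Real.exp (a - 1) := by rw [← Real.exp_add]; ring_nf
  have heq : (a + r ^ 2) ^ n * Real.exp (-((n : ℝ) * r ^ 2)) =
      ((a + r ^ 2) * Real.exp (-(r ^ 2))) ^ n := by
    rw [mul_pow, ← Real.exp_nat_mul]
    ring_nf
  rw [heq, show n = (n - 1) + 1 from (Nat.succ_pred_eq_of_pos hn).symm, pow_succ]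
  exact mul_le_mul_of_nonneg_right (pow_le_pow_left₀ h0 h1 _) h0

lemma integrableOn_main (n : ℕ) (hn : 1 ≤ n) {a : ℝ} (ha0 : 0 ≤ a) :
    IntegrableOn (fun r : ℝ => r * ((a + r ^ 2) ^ n * Real.exp (-((n : ℝ) * r ^ 2))))
      (Set.Ici 0) := by
  set C : ℝ := Real.exp (a - 1) ^ (n - 1) with hC
  have hC0 : 0 < C := by positivity
  have hB : IntegrableOn
      (fun r : ℝ => C * a * (r ^ 1 * Real.exp (-(r ^ 2))) + C * (r ^ 3 * Real.exp (-(r ^ 2))))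
      (Set.Ici 0) := by
    rw [integrableOn_Ici_iff_integrableOn_Ioi]
    exact ((integrableOn_pow_exp_sq 1).const_mul _).add
      ((integrableOn_pow_exp_sq 3).const_mul _)
  refine Integrable.mono' hB ?_ ?_
  · apply Measurable.aestronglyMeasurable
    fun_prop
  · filter_upwards [ae_restrict_mem measurableSet_Ici] with r hr
    have hr0 : (0:ℝ) ≤ r := hr
    rw [Real.norm_eq_abs, abs_of_nonneg (by positivity)]
    have h := key_ineq hn ha0 hr0
    have h2 : r * ((a + r ^ 2) ^ n * Real.exp (-((n : ℝ) * r ^ 2))) ≤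
        r * (C * ((a + r ^ 2) * Real.exp (-(r ^ 2)))) :=
      mul_le_mul_of_nonneg_left h hr0
    calc r * ((a + r ^ 2) ^ n * Real.exp (-((n : ℝ) * r ^ 2)))
        ≤ r * (C * ((a + r ^ 2) * Real.exp (-(r ^ 2)))) := h2
      _ = C * a * (r ^ 1 * Real.exp (-(r ^ 2))) + C * (r ^ 3 * Real.exp (-(r ^ 2))) := by ring

lemma subst_eq (n : ℕ) (hn : 1 ≤ n) {a : ℝ} (ha0 : 0 ≤ a) :
    (∫ r in Set.Ioi (0:ℝ), r * ((a + r ^ 2) ^ n * Real.exp (-((n : ℝ) * r ^ 2)))) * (2 * n)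
      = Real.exp ((n : ℝ) * a) / (n : ℝ) ^ n *
        ∫ v in Set.Ioi ((n : ℝ) * a), v ^ n * Real.exp (-v) := by
  have hn0 : (0:ℝ) < (n : ℝ) := by exact_mod_cast hn
  set f : ℝ → ℝ := fun r => (n : ℝ) * (a + r ^ 2) with hf
  set f' : ℝ → ℝ := fun r => (n : ℝ) * (2 * r) with hf'
  set g : ℝ → ℝ := fun v => (v / n) ^ n * Real.exp ((n : ℝ) * a - v) with hg
  have hfc : ContinuousOn f (Set.Ici 0) := by fun_prop
  have hft : Tendsto f atTop atTop := by
    apply Tendsto.const_mul_atTop hn0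
    exact tendsto_atTop_add_const_left _ a (tendsto_pow_atTop two_ne_zero)
  have hderiv : ∀ x ∈ Set.Ioi (0:ℝ), HasDerivWithinAt f (f' x) (Set.Ioi x) x := by
    intro x hx
    have : HasDerivAt f ((n : ℝ) * (2 * x)) x := by
      simpa using ((hasDerivAt_pow 2 x).const_add a).const_mul (n : ℝ)
    exact this.hasDerivWithinAt
  have hgc : Continuous g := by fun_prop
  have hgint : IntegrableOn g (Set.Ici ((n : ℝ) * a)) := by
    have h1 : IntegrableOn g (Set.Ici 0) := by
      rw [integrableOn_Ici_iff_integrableOn_Ioi]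
      have h2 := (integrableOn_pow_exp n (c := 1) one_pos).const_mul
        (Real.exp ((n : ℝ) * a) / (n : ℝ) ^ n)
      have h2' : IntegrableOn
          (fun v : ℝ => Real.exp ((n : ℝ) * a) / (n : ℝ) ^ n * (v ^ n * Real.exp (-(1 * v))))
          (Set.Ioi 0) := h2
      refine h2'.congr_fun (fun v hv => ?_) measurableSet_Ioi
      have hnn : ((n:ℝ)) ^ n ≠ 0 := by positivity
      rw [hg]
      simp only [one_mul]
      rw [show (n : ℝ) * a - v = (n : ℝ) * a + -v by ring, Real.exp_add]
      rw [div_pow]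
      ring
    exact h1.mono_set (Set.Ici_subset_Ici.mpr (by positivity))
  have himg1 : f '' Set.Ici 0 ⊆ Set.Ici ((n : ℝ) * a) := by
    rintro v ⟨r, hr, rfl⟩
    have : (0:ℝ) ≤ r ^ 2 := sq_nonneg r
    simp only [hf, Set.mem_Ici]
    nlinarith
  have himg2 : f '' Set.Ioi 0 ⊆ Set.Ici ((n : ℝ) * a) :=
    (Set.image_mono (f := f) Set.Ioi_subset_Ici_self).trans himg1
  have hcomp : ∀ r : ℝ, 0 ≤ r → (g ∘ f) r * f' r =
      (r * ((a + r ^ 2) ^ n * Real.exp (-((n : ℝ) * r ^ 2)))) * (2 * n) := by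
    intro r hr
    simp only [Function.comp, hf, hf', hg]
    rw [mul_comm (n:ℝ) (a + r ^ 2), mul_div_assoc, div_self hn0.ne', mul_one]
    rw [show (n : ℝ) * a - (a + r ^ 2) * n = -((n : ℝ) * r ^ 2) by ring]
    ring
  have hint2 : IntegrableOn (fun x => (g ∘ f) x * f' x) (Set.Ici 0) := by
    have hb : IntegrableOn
        (fun x : ℝ => (x * ((a + x ^ 2) ^ n * Real.exp (-((n : ℝ) * x ^ 2)))) * (2 * n))
        (Set.Ici 0) := (integrableOn_main n hn ha0).mul_const (2 * n)
    exact hb.congr_fun (fun x hx => (hcomp x hx).symm) measurableSet_Ici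
  have h := MeasureTheory.integral_comp_mul_deriv_Ioi hfc hft hderiv
    (hgc.continuousOn) (hgint.mono_set himg1) hint2
  have hf0 : f 0 = (n : ℝ) * a := by simp [hf]
  rw [hf0] at h
  have hL : (∫ x in Set.Ioi (0:ℝ), (g ∘ f) x * f' x) =
      (∫ r in Set.Ioi (0:ℝ), r * ((a + r ^ 2) ^ n * Real.exp (-((n : ℝ) * r ^ 2)))) * (2 * n) := by
    rw [← MeasureTheory.integral_mul_const]
    exact setIntegral_congr_fun measurableSet_Ioi (fun x hx => hcomp x (le_of_lt hx))
  have hR : (∫ v in Set.Ioi ((n : ℝ) * a), g v) =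
      Real.exp ((n : ℝ) * a) / (n : ℝ) ^ n *
        ∫ v in Set.Ioi ((n : ℝ) * a), v ^ n * Real.exp (-v) := by
    rw [← MeasureTheory.integral_const_mul]
    refine setIntegral_congr_fun measurableSet_Ioi (fun v hv => ?_)
    rw [hg]
    simp only
    rw [show (n : ℝ) * a - v = (n : ℝ) * a + -v by ring, Real.exp_add]
    ring
  rw [← hL, h, hR]


lemma q_lt_one {a : ℝ} (ha0 : 0 ≤ a) (ha1 : a < 1) :
    Real.exp ((1 - a) * a) / (2 - a) < 1 := by
  rw [div_lt_one (by linarith)]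
  have ht : 0 < 1 - a * (1 - a) := by nlinarith
  have h1 : Real.exp ((1 - a) * a) * (1 - a * (1 - a)) ≤ 1 := by
    have h2 := Real.add_one_le_exp (-(a * (1 - a)))
    have h3 : Real.exp ((1 - a) * a) * Real.exp (-(a * (1 - a))) = 1 := by
      rw [← Real.exp_add, show (1 - a) * a + -(a * (1 - a)) = 0 by ring, Real.exp_zero]
    nlinarith [Real.exp_pos ((1 - a) * a)]
  have h4 : 1 < (2 - a) * (1 - a * (1 - a)) := by
    nlinarith [pow_pos (show (0:ℝ) < 1 - a by linarith) 3]
  nlinarith [Real.exp_pos ((1 - a) * a)]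

lemma split_int (n : ℕ) {a : ℝ} (ha0 : 0 ≤ a) :
    (∫ v in Set.Ioc (0:ℝ) ((n:ℝ) * a), v ^ n * Real.exp (-v)) +
      (∫ v in Set.Ioi ((n:ℝ) * a), v ^ n * Real.exp (-v)) = (n ! : ℝ) := by
  have hna : (0:ℝ) ≤ (n:ℝ) * a := by positivity
  have hint : IntegrableOn (fun v : ℝ => v ^ n * Real.exp (-v)) (Set.Ioi 0) := by
    have := integrableOn_pow_exp n (c := 1) one_pos
    simpa using this
  have h1 := hint.mono_set (Set.Ioc_subset_Ioi_self :
    Set.Ioc (0:ℝ) ((n:ℝ) * a) ⊆ Set.Ioi 0)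
  have h2 := hint.mono_set (Set.Ioi_subset_Ioi hna)
  rw [← setIntegral_union (Set.Ioc_disjoint_Ioi le_rfl) measurableSet_Ioi h1 h2,
    Set.Ioc_union_Ioi_eq_Ioi hna]
  have h3 := int_pow_exp n (c := 1) one_pos
  simpa using h3

lemma tail_bound (n : ℕ) {a : ℝ} (ha0 : 0 ≤ a) (ha1 : a < 1) :
    (∫ v in Set.Ioc (0:ℝ) ((n:ℝ) * a), v ^ n * Real.exp (-v)) ≤
      (Real.exp ((1 - a) * a) / (2 - a)) ^ n * ((n ! : ℝ) / (2 - a)) := by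
  set c : ℝ := 2 - a with hc
  have hc0 : (0:ℝ) < c := by rw [hc]; linarith
  have step1 : (∫ v in Set.Ioc (0:ℝ) ((n:ℝ) * a), v ^ n * Real.exp (-v)) ≤
      ∫ v in Set.Ioc (0:ℝ) ((n:ℝ) * a),
        Real.exp ((1 - a) * ((n:ℝ) * a)) * (v ^ n * Real.exp (-(c * v))) := by
    refine setIntegral_mono_on ?_ ?_ measurableSet_Ioc ?_
    · exact (Continuous.integrableOn_Ioc (by fun_prop))
    · exact (Continuous.integrableOn_Ioc (by fun_prop))
    · intro v hv
      have hkey : Real.exp (-v) ≤ Real.exp ((1 - a) * ((n:ℝ) * a)) * Real.exp (-(c * v)) := by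
        rw [← Real.exp_add]
        apply Real.exp_le_exp.mpr
        have hv2 := hv.2
        have hprod : (0:ℝ) ≤ (1 - a) * ((n:ℝ) * a - v) :=
          mul_nonneg (by linarith) (by linarith)
        rw [hc]
        nlinarith [hprod]
      calc v ^ n * Real.exp (-v)
          ≤ v ^ n * (Real.exp ((1 - a) * ((n:ℝ) * a)) * Real.exp (-(c * v))) :=
            mul_le_mul_of_nonneg_left hkey (pow_nonneg hv.1.le n)
        _ = Real.exp ((1 - a) * ((n:ℝ) * a)) * (v ^ n * Real.exp (-(c * v))) := by ring
  have step2 : (∫ v in Set.Ioc (0:ℝ) ((n:ℝ) * a), v ^ n * Real.exp (-(c * v))) ≤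
      ∫ v in Set.Ioi (0:ℝ), v ^ n * Real.exp (-(c * v)) := by
    refine setIntegral_mono_set (integrableOn_pow_exp n hc0) ?_ ?_
    · filter_upwards [ae_restrict_mem measurableSet_Ioi] with v hv
      have : (0:ℝ) < v := hv
      positivity
    · exact HasSubset.Subset.eventuallyLE Set.Ioc_subset_Ioi_self
  calc (∫ v in Set.Ioc (0:ℝ) ((n:ℝ) * a), v ^ n * Real.exp (-v))
      ≤ ∫ v in Set.Ioc (0:ℝ) ((n:ℝ) * a),
          Real.exp ((1 - a) * ((n:ℝ) * a)) * (v ^ n * Real.exp (-(c * v))) := step1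
    _ = Real.exp ((1 - a) * ((n:ℝ) * a)) *
          ∫ v in Set.Ioc (0:ℝ) ((n:ℝ) * a), v ^ n * Real.exp (-(c * v)) := by
        rw [MeasureTheory.integral_const_mul]
    _ ≤ Real.exp ((1 - a) * ((n:ℝ) * a)) * ∫ v in Set.Ioi (0:ℝ), v ^ n * Real.exp (-(c * v)) :=
        mul_le_mul_of_nonneg_left step2 (Real.exp_pos _).le
    _ = Real.exp ((1 - a) * ((n:ℝ) * a)) * ((n ! : ℝ) / c ^ (n + 1)) := by
        rw [int_pow_exp n hc0]
    _ = (Real.exp ((1 - a) * a) / c) ^ n * ((n ! : ℝ) / c) := by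
        rw [show (1 - a) * ((n:ℝ) * a) = (n:ℝ) * ((1 - a) * a) by ring, Real.exp_nat_mul,
          div_pow, pow_succ]
        field_simp

lemma stirling_tendsto :
    Tendsto (fun n : ℕ => (n ! : ℝ) /
      (Real.sqrt (2 * π * n) * ((n:ℝ) ^ n * Real.exp (-(n:ℝ))))) atTop (nhds 1) := by
  have hpi : (0:ℝ) < Real.sqrt π := Real.sqrt_pos.mpr Real.pi_pos
  have h := Stirling.tendsto_stirlingSeq_sqrt_pi.div_const (Real.sqrt π)
  rw [div_self hpi.ne'] at h
  refine h.congr' ?_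
  filter_upwards [eventually_ge_atTop 1] with n hn
  have hn0 : (0:ℝ) < n := by exact_mod_cast hn
  have e1 : Real.sqrt (2 * π * n) = Real.sqrt (2 * n) * Real.sqrt π := by
    rw [show 2 * π * (n:ℝ) = (2 * n) * π by ring, Real.sqrt_mul (by positivity)]
  have e2 : ((n:ℝ) / Real.exp 1) ^ n = (n:ℝ) ^ n * Real.exp (-(n:ℝ)) := by
    rw [div_pow, Real.exp_one_pow, Real.exp_neg, div_eq_mul_inv]
  rw [Stirling.stirlingSeq, div_div, e1, e2]
  ring_nf

end LaplaceAux

open LaplaceAux Real Nat in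
/-- For every fixed real `a` with `0 ≤ a < 1`,
`lim_{n→∞} ( 2n · ∫_0^∞ r · exp{ n(-r² + log(a + r²)) } dr ) / ( √(2πn) · e^{n(a-1)} ) = 1`. -/
theorem laplace_asymptotics (a : ℝ) (ha0 : 0 ≤ a) (ha1 : a < 1) :
    Tendsto (fun n : ℕ =>
      (2 * (n : ℝ) * ∫ r in Set.Ioi (0 : ℝ),
          r * Real.exp ((n : ℝ) * (-r ^ 2 + Real.log (a + r ^ 2)))) /
        (Real.sqrt (2 * Real.pi * n) * Real.exp ((n : ℝ) * (a - 1))))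
      atTop (nhds 1) := by
  set q : ℝ := Real.exp ((1 - a) * a) / (2 - a) with hq
  have hq1 : q < 1 := q_lt_one ha0 ha1
  have hq0 : 0 ≤ q := div_nonneg (Real.exp_pos _).le (by linarith)
  set T : ℕ → ℝ := fun n => ∫ v in Set.Ioc (0:ℝ) ((n:ℝ) * a), v ^ n * Real.exp (-v) with hT
  set J : ℕ → ℝ := fun n => ∫ v in Set.Ioi ((n:ℝ) * a), v ^ n * Real.exp (-v) with hJ
  have hfact : ∀ n : ℕ, (0:ℝ) < (n ! : ℝ) := fun n => by exact_mod_cast Nat.factorial_pos n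
  have h1 : Tendsto (fun n => T n / (n ! : ℝ)) atTop (nhds 0) := by
    refine squeeze_zero (g := fun n => q ^ n / (2 - a)) (fun n => div_nonneg ?_ (hfact n).le) (fun n => ?_) ?_
    · exact setIntegral_nonneg measurableSet_Ioc (fun v hv => by have h0v : (0:ℝ) < v := hv.1; positivity)
    · have hb : T n ≤ q ^ n * ((n ! : ℝ) / (2 - a)) := tail_bound n ha0 ha1
      calc T n / (n ! : ℝ) ≤ (q ^ n * ((n ! : ℝ) / (2 - a))) / (n ! : ℝ) := by gcongr
        _ = q ^ n / (2 - a) := by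
            rw [div_eq_iff (hfact n).ne']
            ring
    · have := (tendsto_pow_atTop_nhds_zero_of_lt_one hq0 hq1).div_const (2 - a)
      simpa using this
  have h2 : Tendsto (fun n => J n / (n ! : ℝ)) atTop (nhds 1) := by
    have heq : ∀ n : ℕ, 1 - T n / (n ! : ℝ) = J n / (n ! : ℝ) := by
      intro n
      have hs : T n + J n = (n ! : ℝ) := split_int n ha0
      field_simp
      linarith
    have h0 : Tendsto (fun n : ℕ => 1 - T n / (n ! : ℝ)) atTop (nhds 1) := by
      simpa using (tendsto_const_nhds (x := (1:ℝ))).sub h1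
    exact h0.congr heq
  have h4 := h2.mul stirling_tendsto
  rw [one_mul] at h4
  refine h4.congr' ?_
  filter_upwards [eventually_ge_atTop 1] with n hn
  have hn0 : (0:ℝ) < n := by exact_mod_cast hn
  have hint_eq : (∫ r in Set.Ioi (0:ℝ),
      r * Real.exp ((n:ℝ) * (-r ^ 2 + Real.log (a + r ^ 2)))) =
      ∫ r in Set.Ioi (0:ℝ), r * ((a + r ^ 2) ^ n * Real.exp (-((n:ℝ) * r ^ 2))) := by
    refine setIntegral_congr_fun measurableSet_Ioi (fun r hr => ?_)
    have hr0 : (0:ℝ) < r := hr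
    have hpos : (0:ℝ) < a + r ^ 2 := by positivity
    rw [show (n:ℝ) * (-r ^ 2 + Real.log (a + r ^ 2)) =
        (n:ℝ) * Real.log (a + r ^ 2) + -((n:ℝ) * r ^ 2) by ring,
      Real.exp_add, Real.exp_nat_mul, Real.exp_log hpos]
  have hsub := subst_eq n hn ha0
  have hkey : 2 * (n:ℝ) * (∫ r in Set.Ioi (0:ℝ),
      r * ((a + r ^ 2) ^ n * Real.exp (-((n:ℝ) * r ^ 2)))) =
      Real.exp ((n:ℝ) * a) / (n:ℝ) ^ n * J n := by
    rw [← hsub]; ring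
  have hexp : Real.exp ((n:ℝ) * (a - 1)) = Real.exp ((n:ℝ) * a) * Real.exp (-(n:ℝ)) := by
    rw [← Real.exp_add]; ring_nf
  have hs0 : (0:ℝ) < Real.sqrt (2 * π * n) := Real.sqrt_pos.mpr (by positivity)
  rw [hint_eq, hkey, hexp]
  have hnn : ((n:ℝ)) ^ n ≠ 0 := by positivity
  field_simp
end

section
/- Let m ≥ 1 and let b, z_0 ∈ ℂ satisfy Condition (i) or Condition (ii). Then for all λ_1,…,λ_m ≥ 0, all skew-symmetric complex m×m matrices B_{20}, B_{02}, and all t ≥ 0, one has Φ(Λ, B_{20}, B_{02}, t) ≤ m(|z_0|² - 1); moreover equality holds if and only if λ_1 = ⋯ = λ_m = λ_0, B_{20} = 0, B_{02} = 0 and t = 0. In other words, Φ attains its global maximum m(|z_0|²-1) only at the point (λ_0 I_m, 0, 0, 0). -/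
open Matrix

/-- Squared Frobenius norm of a complex matrix. -/
noncomputable def frobSq {m : ℕ} (B : Matrix (Fin m) (Fin m) ℂ) : ℝ :=
  ∑ i, ∑ j, ‖B i j‖ ^ 2

/-- The `4m × 4m` block matrix `F̃(Λ, B₂₀, B₀₂)` with block rows
`(b·B₂₀, 0, -z₀·I, Λ)`, `(0, b·B₀₂ᴴ, -Λ, -conj(z₀)·I)`, `(z₀·I, Λ, conj(b)·B₂₀ᴴ, 0)`,
`(-Λ, conj(z₀)·I, 0, conj(b)·B₀₂)`, where `Λ = diag(λ₁,…,λ_m)`. -/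
noncomputable def Ftilde (m : ℕ) (z₀ b : ℂ) (lam : Fin m → ℝ)
    (B20 B02 : Matrix (Fin m) (Fin m) ℂ) :
    Matrix ((Fin m ⊕ Fin m) ⊕ (Fin m ⊕ Fin m)) ((Fin m ⊕ Fin m) ⊕ (Fin m ⊕ Fin m)) ℂ :=
  let Λ : Matrix (Fin m) (Fin m) ℂ := Matrix.diagonal fun j => (lam j : ℂ)
  Matrix.fromBlocks
    (Matrix.fromBlocks (b • B20) 0 0 (b • B02ᴴ))
    (Matrix.fromBlocks (-(z₀ • (1 : Matrix (Fin m) (Fin m) ℂ))) Λ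
      (-Λ) (-((starRingEnd ℂ) z₀ • (1 : Matrix (Fin m) (Fin m) ℂ))))
    (Matrix.fromBlocks (z₀ • (1 : Matrix (Fin m) (Fin m) ℂ)) Λ
      (-Λ) ((starRingEnd ℂ) z₀ • (1 : Matrix (Fin m) (Fin m) ℂ)))
    (Matrix.fromBlocks ((starRingEnd ℂ) b • B20ᴴ) 0 0 ((starRingEnd ℂ) b • B02))

/-- The phase function
`Φ(Λ,B₂₀,B₀₂,t) = -Σ_j λ_j² - (‖B₂₀‖² + ‖B₀₂‖²)/2 - t + (1/2)·log|det F̃|`,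
with value `⊥ = -∞` when `det F̃ = 0`. -/
noncomputable def PhiFn (m : ℕ) (z₀ b : ℂ) (lam : Fin m → ℝ)
    (B20 B02 : Matrix (Fin m) (Fin m) ℂ) (t : ℝ) : EReal :=
  if (Ftilde m z₀ b lam B20 B02).det = 0 then ⊥
  else ((-∑ j, lam j ^ 2 - (frobSq B20 + frobSq B02) / 2 - t
    + (1 / 2) * Real.log (‖(Ftilde m z₀ b lam B20 B02).det‖) : ℝ) : EReal)

open ComplexOrder

namespace PhiAux

/-- Sum of squared absolute values of all entries. -/
noncomputable def asq {α β : Type*} [Fintype α] [Fintype β] (M : Matrix α β ℂ) : ℝ :=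
  ∑ i, ∑ j, ‖M i j‖ ^ 2

lemma asq_nonneg {α β : Type*} [Fintype α] [Fintype β] (M : Matrix α β ℂ) : 0 ≤ asq M :=
  Finset.sum_nonneg fun _ _ => Finset.sum_nonneg fun _ _ => sq_nonneg _

lemma asq_eq_zero {α β : Type*} [Fintype α] [Fintype β] {M : Matrix α β ℂ}
    (h : asq M = 0) : M = 0 := by
  ext i j
  have h1 : ∀ i ∈ Finset.univ, (0:ℝ) ≤ ∑ j, ‖M i j‖ ^ 2 :=
    fun _ _ => Finset.sum_nonneg fun _ _ => sq_nonneg _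
  have h2 := (Finset.sum_eq_zero_iff_of_nonneg h1).mp h i (Finset.mem_univ i)
  have h3 := (Finset.sum_eq_zero_iff_of_nonneg
    (fun _ _ => sq_nonneg (‖M i _‖))).mp h2 j (Finset.mem_univ j)
  have := pow_eq_zero_iff (n := 2) (by norm_num) |>.mp h3
  simpa using this

lemma asq_smul {α β : Type*} [Fintype α] [Fintype β] (c : ℂ) (M : Matrix α β ℂ) :
    asq (c • M) = ‖c‖ ^ 2 * asq M := by
  simp [asq, Finset.mul_sum, mul_pow]

lemma asq_neg {α β : Type*} [Fintype α] [Fintype β] (M : Matrix α β ℂ) :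
    asq (-M) = asq M := by simp [asq]

lemma asq_conjTranspose {α β : Type*} [Fintype α] [Fintype β] (M : Matrix α β ℂ) :
    asq Mᴴ = asq M := by
  rw [asq, Finset.sum_comm, asq]
  simp [Matrix.conjTranspose_apply]

lemma asq_zero {α β : Type*} [Fintype α] [Fintype β] : asq (0 : Matrix α β ℂ) = 0 := by
  simp [asq]

lemma asq_diagonal {α : Type*} [Fintype α] [DecidableEq α] (d : α → ℂ) :
    asq (Matrix.diagonal d) = ∑ i, ‖d i‖ ^ 2 := by
  rw [asq]
  congr 1; funext i
  rw [Finset.sum_eq_single i (fun j _ hj => by simp [Matrix.diagonal_apply_ne' _ hj]) (by simp)]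
  simp

lemma asq_one {α : Type*} [Fintype α] [DecidableEq α] :
    asq (1 : Matrix α α ℂ) = (Fintype.card α : ℝ) := by
  rw [← Matrix.diagonal_one, asq_diagonal]
  simp

lemma asq_fromBlocks {α β γ δ : Type*} [Fintype α] [Fintype β] [Fintype γ] [Fintype δ]
    (A : Matrix α γ ℂ) (B : Matrix α δ ℂ) (C : Matrix β γ ℂ) (D : Matrix β δ ℂ) :
    asq (Matrix.fromBlocks A B C D) = asq A + asq B + asq C + asq D := by
  rw [asq, Fintype.sum_sum_type]
  simp only [Fintype.sum_sum_type]
  rw [Finset.sum_add_distrib, Finset.sum_add_distrib]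
  simp [asq]
  ring

lemma trace_conjTranspose_mul_self {α : Type*} [Fintype α] (M : Matrix α α ℂ) :
    (Mᴴ * M).trace = ((asq M : ℝ) : ℂ) := by
  rw [Matrix.trace, asq]
  push_cast
  rw [Finset.sum_comm]
  congr 1; funext j
  rw [Matrix.diag_apply, Matrix.mul_apply]
  congr 1; funext i
  rw [Matrix.conjTranspose_apply,
    show (star (M i j) : ℂ) = (starRingEnd ℂ) (M i j) from rfl,
    ← Complex.normSq_eq_conj_mul_self, ← Complex.sq_norm]
  push_cast; ring

lemma trace_eq_sum_eigenvalues {n : Type*} [Fintype n] [DecidableEq n] {A : Matrix n n ℂ}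
    (hA : A.IsHermitian) : A.trace = ∑ i, (hA.eigenvalues i : ℂ) := by
  exact hA.trace_eq_sum_eigenvalues

lemma eq_one_of_eigenvalues_one {n : Type*} [Fintype n] [DecidableEq n] {A : Matrix n n ℂ}
    (hA : A.IsHermitian) (h : ∀ i, hA.eigenvalues i = 1) : A = 1 := by
  have hd : Matrix.diagonal (RCLike.ofReal ∘ hA.eigenvalues) = (1 : Matrix n n ℂ) := by
    ext i j
    by_cases hij : i = j <;> simp [Matrix.diagonal_apply, Matrix.one_apply, hij, h]
  conv_lhs => rw [hA.spectral_theorem]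
  rw [hd, map_one]

lemma frobSq_eq_asq {m : ℕ} (B : Matrix (Fin m) (Fin m) ℂ) : frobSq B = asq B := rfl

lemma asq_Ftilde (m : ℕ) (z₀ b : ℂ) (lam : Fin m → ℝ)
    (B20 B02 : Matrix (Fin m) (Fin m) ℂ) :
    asq (Ftilde m z₀ b lam B20 B02)
      = 4 * (∑ j, lam j ^ 2) + 4 * m * ‖z₀‖ ^ 2
        + 2 * ‖b‖ ^ 2 * (frobSq B20 + frobSq B02) := by
  have hΛ : asq (Matrix.diagonal fun j => ((lam j : ℝ) : ℂ)) = ∑ j, lam j ^ 2 := by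
    rw [asq_diagonal]
    congr 1; funext j
    rw [Complex.norm_real, Real.norm_eq_abs, sq_abs]
  rw [Ftilde]
  simp only [asq_fromBlocks, asq_neg, asq_smul, asq_one, asq_zero, asq_conjTranspose, hΛ,
    frobSq_eq_asq, _root_.map_one, Complex.norm_conj, Fintype.card_fin]
  ring

lemma gram_at_point (m : ℕ) (z₀ b : ℂ) (hz : ‖z₀‖ < 1) :
    (Ftilde m z₀ b (fun _ => Real.sqrt (1 - ‖z₀‖ ^ 2)) 0 0)ᴴ
      * Ftilde m z₀ b (fun _ => Real.sqrt (1 - ‖z₀‖ ^ 2)) 0 0 = 1 := by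
  set c : ℝ := Real.sqrt (1 - ‖z₀‖ ^ 2) with hc
  have hd : Matrix.diagonal (fun _ : Fin m => ((c : ℝ) : ℂ))
      = (c : ℂ) • (1 : Matrix (Fin m) (Fin m) ℂ) := (Matrix.smul_one_eq_diagonal _).symm
  have key : (starRingEnd ℂ) z₀ * z₀ + (c : ℂ) * (c : ℂ) = 1 := by
    have h1 : (starRingEnd ℂ) z₀ * z₀ = ((‖z₀‖ ^ 2 : ℝ) : ℂ) := by
      rw [← Complex.normSq_eq_conj_mul_self, Complex.sq_norm]
    have h2 : ((c : ℝ) : ℂ) * ((c : ℝ) : ℂ) = ((1 - ‖z₀‖ ^ 2 : ℝ) : ℂ) := by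
      rw [← Complex.ofReal_mul, Real.mul_self_sqrt
        (by nlinarith [norm_nonneg z₀] : (0:ℝ) ≤ 1 - ‖z₀‖ ^ 2)]
    rw [h1, h2]
    push_cast; ring
  rw [Ftilde]
  simp only [hd, smul_zero, Matrix.conjTranspose_zero, Matrix.fromBlocks_conjTranspose,
    Matrix.conjTranspose_smul, Matrix.conjTranspose_neg, Matrix.conjTranspose_one,
    Matrix.fromBlocks_multiply, Matrix.smul_mul, Matrix.mul_smul, Matrix.one_mul,
    Matrix.mul_one, smul_smul, Matrix.zero_mul, Matrix.mul_zero, add_zero, zero_add,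
    Matrix.neg_mul, Matrix.mul_neg, neg_neg, smul_neg, ← add_smul, Complex.star_def,
    RingHom.id_apply, Complex.conj_conj, Complex.conj_ofReal]
  have key2 : z₀ * (starRingEnd ℂ) z₀ + (c:ℂ) * (c:ℂ) = 1 := by rw [mul_comm]; exact key
  have key3 : (c:ℂ) * (c:ℂ) + (starRingEnd ℂ) z₀ * z₀ = 1 := by rw [add_comm]; exact key
  have key4 : ((c:ℂ) * (starRingEnd ℂ) z₀) • (1 : Matrix (Fin m) (Fin m) ℂ)
      + -(((starRingEnd ℂ) z₀ * (c:ℂ)) • 1) = 0 := by rw [mul_comm]; simp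
  have key5 : -(((c:ℂ) * (starRingEnd ℂ) z₀) • (1 : Matrix (Fin m) (Fin m) ℂ))
      + ((starRingEnd ℂ) z₀ * (c:ℂ)) • 1 = 0 := by rw [mul_comm]; simp
  have key6 : ((z₀ : ℂ) * (c:ℂ)) • (1 : Matrix (Fin m) (Fin m) ℂ)
      + -(((c:ℂ) * z₀) • 1) = 0 := by rw [mul_comm]; simp
  have key7 : -(((z₀ : ℂ) * (c:ℂ)) • (1 : Matrix (Fin m) (Fin m) ℂ))
      + ((c:ℂ) * z₀) • 1 = 0 := by rw [mul_comm]; simp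
  simp only [key2, key3, key4, key5, key6, key7, one_smul, neg_zero, add_zero, zero_add,
    Matrix.fromBlocks_zero, Matrix.fromBlocks_one]

section entries
variable (m : ℕ) (z₀ b : ℂ) (lam : Fin m → ℝ) (B20 B02 : Matrix (Fin m) (Fin m) ℂ)

lemma B20_entry (hG : (Ftilde m z₀ b lam B20 B02)ᴴ * Ftilde m z₀ b lam B20 B02 = 1)
    (hb : b ≠ 0) (hzim : z₀.im ≠ 0) (i j : Fin m) : B20 i j = 0 := by
  have h := congrFun (congrFun hG (Sum.inl (Sum.inl j))) (Sum.inr (Sum.inl i))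
  simp only [Matrix.mul_apply, Matrix.conjTranspose_apply, Ftilde, Fintype.sum_sum_type,
    Matrix.fromBlocks_apply₁₁, Matrix.fromBlocks_apply₁₂, Matrix.fromBlocks_apply₂₁,
    Matrix.fromBlocks_apply₂₂, Matrix.smul_apply, Matrix.one_apply, Matrix.zero_apply,
    Matrix.neg_apply, Matrix.diagonal_apply, Matrix.conjTranspose_apply,
    smul_eq_mul, mul_ite, ite_mul, mul_zero, zero_mul, mul_one, one_mul,
    Complex.star_def, apply_ite (starRingEnd ℂ), map_zero, mul_neg, map_neg, _root_.map_mul,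
    Complex.conj_conj, Complex.conj_ofReal, star_zero, neg_mul, neg_zero,
    Finset.sum_neg_distrib,
    Finset.sum_ite_eq, Finset.sum_ite_eq', Finset.mem_univ, if_true, star_mul', star_star,
    Sum.inl.injEq, Sum.inr.injEq, add_zero, zero_add, Finset.sum_const_zero,
    reduceCtorEq, if_false] at h
  have h2 : (starRingEnd ℂ) (B20 i j) * ((starRingEnd ℂ) b * ((starRingEnd ℂ) z₀ - z₀)) = 0 := by
    linear_combination h
  have hb' : (starRingEnd ℂ) b ≠ 0 := by simpa using hb
  have hz' : (starRingEnd ℂ) z₀ - z₀ ≠ 0 := by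
    intro hz
    have := congrArg Complex.im hz
    simp [Complex.sub_im, Complex.conj_im] at this
    exact hzim (by linarith)
  rcases mul_eq_zero.mp h2 with h3 | h3
  · simpa using h3
  · rcases mul_eq_zero.mp h3 with h4 | h4
    · exact absurd h4 hb'
    · exact absurd h4 hz'

lemma B02_entry (hG : (Ftilde m z₀ b lam B20 B02)ᴴ * Ftilde m z₀ b lam B20 B02 = 1)
    (hb : b ≠ 0) (hzim : z₀.im ≠ 0) (i j : Fin m) : B02 j i = 0 := by
  have h := congrFun (congrFun hG (Sum.inl (Sum.inr j))) (Sum.inr (Sum.inr i))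
  simp only [Matrix.mul_apply, Matrix.conjTranspose_apply, Ftilde, Fintype.sum_sum_type,
    Matrix.fromBlocks_apply₁₁, Matrix.fromBlocks_apply₁₂, Matrix.fromBlocks_apply₂₁,
    Matrix.fromBlocks_apply₂₂, Matrix.smul_apply, Matrix.one_apply, Matrix.zero_apply,
    Matrix.neg_apply, Matrix.diagonal_apply, Matrix.conjTranspose_apply,
    smul_eq_mul, mul_ite, ite_mul, mul_zero, zero_mul, mul_one, one_mul,
    Complex.star_def, apply_ite (starRingEnd ℂ), map_zero, mul_neg, map_neg, _root_.map_mul,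
    Complex.conj_conj, Complex.conj_ofReal, star_zero, neg_mul, neg_zero,
    Finset.sum_neg_distrib,
    Finset.sum_ite_eq, Finset.sum_ite_eq', Finset.mem_univ, if_true, star_mul', star_star,
    Sum.inl.injEq, Sum.inr.injEq, add_zero, zero_add, Finset.sum_const_zero,
    reduceCtorEq, if_false] at h
  have h2 : B02 j i * ((starRingEnd ℂ) b * (z₀ - (starRingEnd ℂ) z₀)) = 0 := by
    linear_combination h
  have hb' : (starRingEnd ℂ) b ≠ 0 := by simpa using hb
  have hz' : z₀ - (starRingEnd ℂ) z₀ ≠ 0 := by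
    intro hz
    have := congrArg Complex.im hz
    simp [Complex.sub_im, Complex.conj_im] at this
    exact hzim (by linarith)
  rcases mul_eq_zero.mp h2 with h3 | h3
  · exact h3
  · rcases mul_eq_zero.mp h3 with h4 | h4
    · exact absurd h4 hb'
    · exact absurd h4 hz'

lemma diag_entry (hG : (Ftilde m z₀ b lam 0 0)ᴴ * Ftilde m z₀ b lam 0 0 = 1)
    (hlam : ∀ j, 0 ≤ lam j) (j : Fin m) :
    lam j = Real.sqrt (1 - ‖z₀‖ ^ 2) := by
  have h := congrFun (congrFun hG (Sum.inl (Sum.inl j))) (Sum.inl (Sum.inl j))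
  simp only [Matrix.mul_apply, Matrix.conjTranspose_apply, Ftilde, Fintype.sum_sum_type,
    Matrix.fromBlocks_apply₁₁, Matrix.fromBlocks_apply₁₂, Matrix.fromBlocks_apply₂₁,
    Matrix.fromBlocks_apply₂₂, Matrix.smul_apply, Matrix.one_apply, Matrix.zero_apply,
    Matrix.neg_apply, Matrix.diagonal_apply, Matrix.conjTranspose_apply,
    smul_eq_mul, mul_ite, ite_mul, mul_zero, zero_mul, mul_one, one_mul,
    Complex.star_def, apply_ite (starRingEnd ℂ), map_zero, mul_neg, map_neg, _root_.map_mul,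
    Complex.conj_conj, Complex.conj_ofReal, star_zero, neg_mul, neg_zero,
    Finset.sum_neg_distrib,
    Finset.sum_ite_eq, Finset.sum_ite_eq', Finset.mem_univ, if_true, star_mul', star_star,
    Sum.inl.injEq, Sum.inr.injEq, add_zero, zero_add, Finset.sum_const_zero,
    reduceCtorEq, if_false] at h
  have h2 : ((‖z₀‖ ^ 2 + lam j ^ 2 : ℝ) : ℂ) = 1 := by
    rw [Complex.ofReal_add, ← Complex.normSq_eq_conj_mul_self (z := z₀), Complex.sq_norm] at *
    push_cast at h ⊢
    linear_combination h
  have h3 : ‖z₀‖ ^ 2 + lam j ^ 2 = 1 := by exact_mod_cast h2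
  have h4 : 1 - ‖z₀‖ ^ 2 = lam j ^ 2 := by linarith
  rw [h4, Real.sqrt_sq (hlam j)]

end entries

end PhiAux

set_option maxHeartbeats 1600000 in
/-- Lemma 3.1 of the paper.  Let `m ≥ 1` and let `b, z₀ ∈ ℂ` satisfy
Condition (i) (`|b| < 1`, `|z₀| < 1`) or Condition (ii) (`|b| = 1`, `|z₀| < 1`, `z₀ ∉ ℝ`).
Then for all `λ_j ≥ 0`, skew-symmetric `B₂₀, B₀₂` and `t ≥ 0` one has
`Φ(Λ,B₂₀,B₀₂,t) ≤ m(|z₀|² - 1)` with equality iff `λ₁ = ⋯ = λ_m = λ₀ := √(1-|z₀|²)`,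
`B₂₀ = 0`, `B₀₂ = 0`, `t = 0`. -/
theorem phi_global_max (m : ℕ) (hm : 1 ≤ m) (b z₀ : ℂ)
    (hcond : (‖b‖ < 1 ∧ ‖z₀‖ < 1) ∨
      (‖b‖ = 1 ∧ ‖z₀‖ < 1 ∧ z₀.im ≠ 0))
    (lam : Fin m → ℝ) (hlam : ∀ j, 0 ≤ lam j)
    (B20 B02 : Matrix (Fin m) (Fin m) ℂ)
    (hB20 : B20ᵀ = -B20) (hB02 : B02ᵀ = -B02)
    (t : ℝ) (ht : 0 ≤ t) :
    PhiFn m z₀ b lam B20 B02 t ≤ (((m : ℝ) * (‖z₀‖ ^ 2 - 1) : ℝ) : EReal) ∧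
    (PhiFn m z₀ b lam B20 B02 t = (((m : ℝ) * (‖z₀‖ ^ 2 - 1) : ℝ) : EReal) ↔
      ((∀ j, lam j = Real.sqrt (1 - ‖z₀‖ ^ 2)) ∧ B20 = 0 ∧ B02 = 0 ∧ t = 0)) := by
  classical
  have hz : ‖z₀‖ < 1 := by rcases hcond with ⟨_, h⟩ | ⟨_, h, _⟩ <;> exact h
  have hab : ‖b‖ ≤ 1 := by
    rcases hcond with ⟨h, _⟩ | ⟨h, _, _⟩
    · exact le_of_lt h
    · exact le_of_eq h
  have hz2 : ‖z₀‖ ^ 2 < 1 := by nlinarith [norm_nonneg z₀]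
  -- the point value computation (used for the converse direction)
  have point_val : ((∀ j, lam j = Real.sqrt (1 - ‖z₀‖ ^ 2)) ∧
      B20 = 0 ∧ B02 = 0 ∧ t = 0) →
      PhiFn m z₀ b lam B20 B02 t = (((m : ℝ) * (‖z₀‖ ^ 2 - 1) : ℝ) : EReal) := by
    rintro ⟨hl, h20, h02, ht0⟩
    have hlameq : lam = fun _ => Real.sqrt (1 - ‖z₀‖ ^ 2) := funext hl
    subst h20 h02 ht0 hlameq
    have hG1 := PhiAux.gram_at_point m z₀ b hz
    set F := Ftilde m z₀ b (fun _ => Real.sqrt (1 - ‖z₀‖ ^ 2)) 0 0 with hF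
    have hdet1 : ‖F.det‖ = 1 := by
      have hd := congrArg Matrix.det hG1
      rw [Matrix.det_mul, Matrix.det_conjTranspose, Matrix.det_one] at hd
      have h1 : ((‖F.det‖ ^ 2 : ℝ) : ℂ) = 1 := by
        rw [← hd, show (star F.det : ℂ) = (starRingEnd ℂ) F.det from rfl,
          ← Complex.normSq_eq_conj_mul_self, Complex.sq_norm]
      have h2 : ‖F.det‖ ^ 2 = 1 := by exact_mod_cast h1
      nlinarith [norm_nonneg F.det]
    have hdetne : F.det ≠ 0 := by
      intro h0; rw [h0] at hdet1; simp at hdet1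
    rw [PhiFn, if_neg hdetne]
    rw [show Ftilde m z₀ b (fun _ => Real.sqrt (1 - ‖z₀‖ ^ 2)) 0 0 = F from rfl,
      hdet1, Real.log_one]
    rw [EReal.coe_eq_coe_iff]
    have hsum : (∑ _j : Fin m, Real.sqrt (1 - ‖z₀‖ ^ 2) ^ 2 : ℝ)
        = m * (1 - ‖z₀‖ ^ 2) := by
      rw [Finset.sum_const, Real.sq_sqrt (by linarith : (0:ℝ) ≤ 1 - ‖z₀‖ ^ 2)]
      simp [mul_comm]
    rw [show frobSq (0 : Matrix (Fin m) (Fin m) ℂ) = 0 from PhiAux.asq_zero]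
    rw [show (∑ j : Fin m, (fun _ : Fin m => Real.sqrt (1 - ‖z₀‖ ^ 2)) j ^ 2 : ℝ)
      = (m : ℝ) * (1 - ‖z₀‖ ^ 2) from hsum]
    ring
  -- main machinery
  set F := Ftilde m z₀ b lam B20 B02 with hF
  by_cases hdet : F.det = 0
  · refine ⟨?_, ?_, ?_⟩
    · rw [PhiFn, if_pos hdet]; exact bot_le
    · intro h; rw [PhiFn, if_pos hdet] at h; exact absurd h (EReal.bot_ne_coe _)
    · intro hpt
      exfalso
      have hpv := point_val hpt
      rw [PhiFn, if_pos hdet] at hpv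
      exact (EReal.bot_ne_coe _) hpv
  · have hpsd : ((F)ᴴ * F).PosSemidef := Matrix.posSemidef_conjTranspose_mul_self F
    have hherm : ((F)ᴴ * F).IsHermitian := hpsd.1
    have hμ0 : ∀ i, 0 ≤ hherm.eigenvalues i := hpsd.eigenvalues_nonneg
    have hprod : (∏ i, hherm.eigenvalues i : ℝ) = ‖F.det‖ ^ 2 := by
      have h1 := hherm.det_eq_prod_eigenvalues
      have h2 : ((F)ᴴ * F).det = ((‖F.det‖ ^ 2 : ℝ) : ℂ) := by
        rw [Matrix.det_mul, Matrix.det_conjTranspose,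
          show (star F.det : ℂ) = (starRingEnd ℂ) F.det from rfl,
          ← Complex.normSq_eq_conj_mul_self, Complex.sq_norm]
      rw [h2] at h1
      have h3 : ((‖F.det‖ ^ 2 : ℝ) : ℂ) = ((∏ i, hherm.eigenvalues i : ℝ) : ℂ) := by
        rw [h1]; push_cast; rfl
      exact_mod_cast h3.symm
    have htr : (∑ i, hherm.eigenvalues i : ℝ)
        = 4 * (∑ j, lam j ^ 2) + 4 * m * ‖z₀‖ ^ 2
        + 2 * ‖b‖ ^ 2 * (frobSq B20 + frobSq B02) := by
      have h1 := PhiAux.trace_eq_sum_eigenvalues hherm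
      rw [PhiAux.trace_conjTranspose_mul_self] at h1
      have h2 : ((PhiAux.asq F : ℝ) : ℂ) = ((∑ i, hherm.eigenvalues i : ℝ) : ℂ) := by
        rw [h1]; push_cast; rfl
      have h3 : PhiAux.asq F = ∑ i, hherm.eigenvalues i := by exact_mod_cast h2
      rw [← h3, hF, PhiAux.asq_Ftilde]
    have habsdet : 0 < ‖F.det‖ := by
      rcases lt_or_eq_of_le (norm_nonneg F.det) with h | h
      · exact h
      · exact absurd (norm_eq_zero.mp h.symm) hdet
    have hμpos : ∀ i, 0 < hherm.eigenvalues i := by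
      intro i
      rcases lt_or_eq_of_le (hμ0 i) with h | h
      · exact h
      · exfalso
        have h0 : (∏ i, hherm.eigenvalues i : ℝ) = 0 :=
          Finset.prod_eq_zero (Finset.mem_univ i) h.symm
        rw [hprod] at h0
        nlinarith
    have hlogdet : Real.log (‖F.det‖) = (1/2) * ∑ i, Real.log (hherm.eigenvalues i) := by
      have h1 : Real.log (‖F.det‖ ^ 2) = ∑ i, Real.log (hherm.eigenvalues i) := by
        rw [← hprod, Real.log_prod (fun i _ => (hμpos i).ne')]
      rw [Real.log_pow] at h1
      push_cast at h1
      linarith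
    set S : ℝ := frobSq B20 + frobSq B02 with hS
    set Φr : ℝ := -∑ j, lam j ^ 2 - S / 2 - t
      + (1 / 2) * Real.log (‖F.det‖) with hΦr
    have hcard : (∑ _i : (Fin m ⊕ Fin m) ⊕ (Fin m ⊕ Fin m), (1:ℝ)) = 4 * m := by
      simp [Finset.sum_const, Fintype.card_sum, Fintype.card_fin]
      ring
    have hidentity : Φr = m * (‖z₀‖ ^ 2 - 1)
        + (1/4) * (∑ i, (Real.log (hherm.eigenvalues i) - (hherm.eigenvalues i - 1)))
        + (‖b‖ ^ 2 - 1) / 2 * S - t := by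
      rw [hΦr, hlogdet]
      have hsplit : (∑ i, (Real.log (hherm.eigenvalues i) - (hherm.eigenvalues i - 1)))
          = (∑ i, Real.log (hherm.eigenvalues i)) - (∑ i, hherm.eigenvalues i) + 4 * m := by
        rw [show (∑ i, (Real.log (hherm.eigenvalues i) - (hherm.eigenvalues i - 1)))
          = (∑ i, Real.log (hherm.eigenvalues i)) - ((∑ i, hherm.eigenvalues i)
            - ∑ _i : (Fin m ⊕ Fin m) ⊕ (Fin m ⊕ Fin m), (1:ℝ)) by
            rw [← Finset.sum_sub_distrib, ← Finset.sum_sub_distrib]]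
        rw [hcard]
        ring
      rw [hsplit, htr]
      ring
    have hterm_nonpos : ∀ i ∈ (Finset.univ : Finset ((Fin m ⊕ Fin m) ⊕ (Fin m ⊕ Fin m))),
        Real.log (hherm.eigenvalues i) - (hherm.eigenvalues i - 1) ≤ 0 := by
      intro i _
      have := Real.log_le_sub_one_of_pos (hμpos i)
      linarith
    have hsum_nonpos : (∑ i, (Real.log (hherm.eigenvalues i) - (hherm.eigenvalues i - 1))) ≤ 0 :=
      Finset.sum_nonpos hterm_nonpos
    have hS0 : 0 ≤ S := by
      rw [hS, PhiAux.frobSq_eq_asq, PhiAux.frobSq_eq_asq]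
      exact add_nonneg (PhiAux.asq_nonneg _) (PhiAux.asq_nonneg _)
    have hbS : (‖b‖ ^ 2 - 1) / 2 * S ≤ 0 := by
      apply mul_nonpos_of_nonpos_of_nonneg _ hS0
      nlinarith [norm_nonneg b]
    have hΦle : Φr ≤ m * (‖z₀‖ ^ 2 - 1) := by
      rw [hidentity]; linarith
    have hPhiFn : PhiFn m z₀ b lam B20 B02 t = ((Φr : ℝ) : EReal) := by
      rw [PhiFn, if_neg hdet]
    refine ⟨?_, ?_, point_val⟩
    · rw [hPhiFn]
      exact EReal.coe_le_coe_iff.mpr hΦle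
    · intro heq
      rw [hPhiFn] at heq
      have heq2 : Φr = m * (‖z₀‖ ^ 2 - 1) := EReal.coe_eq_coe_iff.mp heq
      rw [hidentity] at heq2
      have hA0 : (∑ i, (Real.log (hherm.eigenvalues i) - (hherm.eigenvalues i - 1))) = 0 := by
        linarith
      have ht0 : t = 0 := by linarith
      have hB0 : (‖b‖ ^ 2 - 1) / 2 * S = 0 := by linarith
      have hμ1 : ∀ i, hherm.eigenvalues i = 1 := by
        intro i
        have hz0 := (Finset.sum_eq_zero_iff_of_nonpos hterm_nonpos).mp hA0 i (Finset.mem_univ i)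
        by_contra hne
        have := Real.log_lt_sub_one_of_pos (hμpos i) hne
        linarith
      have hG1 : (F)ᴴ * F = 1 := PhiAux.eq_one_of_eigenvalues_one hherm hμ1
      rw [hF] at hG1
      have hB20z : B20 = 0 ∧ B02 = 0 := by
        rcases hcond with ⟨hb1, _⟩ | ⟨hb1, _, him⟩
        · have hbne : ‖b‖ ^ 2 - 1 ≠ 0 := by nlinarith [norm_nonneg b]
          have hSz : S = 0 := by
            rcases mul_eq_zero.mp hB0 with h | h
            · exact absurd h (by simpa [div_eq_zero_iff] using hbne)
            · exact h
          rw [hS, PhiAux.frobSq_eq_asq, PhiAux.frobSq_eq_asq] at hSz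
          have hn1 := PhiAux.asq_nonneg B20
          have hn2 := PhiAux.asq_nonneg B02
          exact ⟨PhiAux.asq_eq_zero (by linarith), PhiAux.asq_eq_zero (by linarith)⟩
        · have hbne : b ≠ 0 := by
            intro h0; rw [h0] at hb1; simp at hb1
          constructor
          · ext i j
            simpa using PhiAux.B20_entry m z₀ b lam B20 B02 hG1 hbne him i j
          · ext i j
            simpa using PhiAux.B02_entry m z₀ b lam B20 B02 hG1 hbne him j i
      obtain ⟨h20, h02⟩ := hB20z
      rw [h20, h02] at hG1
      exact ⟨PhiAux.diag_entry m z₀ b lam hG1 hlam, h20, h02, ht0⟩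
end

section
/- Let m ≥ 1, z_0 ∈ ℂ, b ∈ ℂ, let Λ = diag(λ_1,…,λ_m) be a real diagonal matrix and let B_{20}, B_{02} be skew-symmetric complex m×m matrices. Then |det F̃(Λ,B_{20},B_{02})| ≤ ∏_{j=1}^m ( |z_0|² + λ_j² + |b|²·Σ_{k=1}^m |(B_{20})_{jk}|² ) · ( |z_0|² + λ_j² + |b|²·Σ_{k=1}^m |(B_{02})_{jk}|² ). -/
open Matrix
open scoped ComplexOrder

section Hadamard

variable {n : Type*} [Fintype n] [DecidableEq n]

private lemma trace_eq_sum_eig' {A : Matrix n n ℂ} (hA : A.IsHermitian) :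
    A.trace = ∑ i, (hA.eigenvalues i : ℂ) := by
  exact hA.trace_eq_sum_eigenvalues

private lemma psd_det_le_one' {P : Matrix n n ℂ} (hP : P.PosSemidef) (hd : ∀ i, P i i = 1) :
    ∃ r : ℝ, P.det = (r : ℂ) ∧ r ≤ 1 := by
  rcases isEmpty_or_nonempty n with h | h
  · exact ⟨1, by simp [Matrix.det_isEmpty], le_refl 1⟩
  have hA := hP.1
  have hcard : (0 : ℝ) < Fintype.card n := by
    exact_mod_cast Fintype.card_pos
  set N := Fintype.card n with hN
  have heig : ∀ i, 0 ≤ hA.eigenvalues i := hP.eigenvalues_nonneg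
  have htr : (∑ i, hA.eigenvalues i) = N := by
    have h1 : P.trace = (N : ℂ) := by
      rw [Matrix.trace]
      simp only [Matrix.diag_apply, hd]
      simp [hN]
    have h2 := trace_eq_sum_eig' hA
    rw [h1] at h2
    exact_mod_cast h2.symm
  have hAM := Real.geom_mean_le_arith_mean_weighted Finset.univ
    (fun _ => (N : ℝ)⁻¹) hA.eigenvalues (fun i _ => by positivity)
    (by simp [hN]) (fun i _ => heig i)
  have hprod : ∏ i, hA.eigenvalues i ^ ((N : ℝ)⁻¹) = (∏ i, hA.eigenvalues i) ^ ((N : ℝ)⁻¹) := by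
    rw [← Real.finset_prod_rpow _ _ (fun i _ => heig i)]
  have hsum : ∑ i, (N : ℝ)⁻¹ * hA.eigenvalues i = 1 := by
    rw [← Finset.mul_sum, htr]
    field_simp
  rw [hprod, hsum] at hAM
  have hpow : (∏ i, hA.eigenvalues i) ≤ 1 := by
    have h0 : (0:ℝ) ≤ ∏ i, hA.eigenvalues i := Finset.prod_nonneg fun i _ => heig i
    have := Real.rpow_le_rpow (Real.rpow_nonneg h0 _) hAM (le_of_lt hcard)
    rwa [← Real.rpow_mul h0, inv_mul_cancel₀ (ne_of_gt hcard),
      Real.rpow_one, Real.one_rpow] at this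
  exact ⟨∏ i, hA.eigenvalues i, by rw [hA.det_eq_prod_eigenvalues]; norm_cast, hpow⟩

/-- Hadamard's inequality, squared form. -/
private lemma hadamard_sq' (M : Matrix n n ℂ) :
    ‖M.det‖ ^ 2 ≤ ∏ i, ∑ j, ‖M i j‖ ^ 2 := by
  by_cases hz : ∃ i, ∀ j, M i j = 0
  · obtain ⟨i, hi⟩ := hz
    rw [Matrix.det_eq_zero_of_row_eq_zero i hi]
    simp only [map_zero, norm_zero, ne_eq, OfNat.ofNat_ne_zero, not_false_eq_true, zero_pow]
    exact Finset.prod_nonneg fun i _ => Finset.sum_nonneg fun j _ => sq_nonneg _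
  push_neg at hz
  set r : n → ℝ := fun i => ∑ j, ‖M i j‖ ^ 2 with hr
  have hrpos : ∀ i, 0 < r i := by
    intro i
    obtain ⟨j, hj⟩ := hz i
    have h1 : 0 < ‖M i j‖ ^ 2 := by
      have := norm_pos_iff.mpr hj; positivity
    exact h1.trans_le (Finset.single_le_sum (f := fun k => ‖M i k‖ ^ 2)
      (fun k _ => sq_nonneg _) (Finset.mem_univ j))
  set c : n → ℂ := fun i => (((Real.sqrt (r i))⁻¹ : ℝ) : ℂ) with hc
  set Nm := Matrix.diagonal c * M with hNm
  have habs_c : ∀ i, ‖c i‖ ^ 2 = (r i)⁻¹ := by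
    intro i
    rw [hc]
    simp only [Complex.norm_real, Real.norm_eq_abs, abs_of_nonneg (inv_nonneg.mpr (Real.sqrt_nonneg _))]
    rw [← Real.sqrt_inv, Real.sq_sqrt (inv_nonneg.mpr (hrpos i).le)]
  have hNapp : ∀ i j, Nm i j = c i * M i j := fun i j => Matrix.diagonal_mul c M i j
  have hP : (Nm * Nmᴴ).PosSemidef := Matrix.posSemidef_self_mul_conjTranspose Nm
  have hd : ∀ i, (Nm * Nmᴴ) i i = 1 := by
    intro i
    rw [Matrix.mul_apply]
    have h1 : ∀ j, Nm i j * Nmᴴ j i = (((r i)⁻¹ * ‖M i j‖ ^ 2 : ℝ) : ℂ) := by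
      intro j
      rw [Matrix.conjTranspose_apply, Complex.star_def, Complex.mul_conj, ← Complex.sq_norm, hNapp,
        norm_mul, mul_pow, habs_c]
    rw [Finset.sum_congr rfl fun j _ => h1 j, ← Complex.ofReal_sum, ← Finset.mul_sum]
    rw [show (∑ j : n, ‖M i j‖ ^ 2) = r i from rfl, inv_mul_cancel₀ (hrpos i).ne']
    simp
  obtain ⟨t, ht, ht1⟩ := psd_det_le_one' hP hd
  have hdet : ((‖Nm.det‖ ^ 2 : ℝ) : ℂ) = (t : ℂ) := by
    rw [← ht]
    conv_rhs => rw [Matrix.det_mul, Matrix.det_conjTranspose]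
    rw [Complex.star_def, Complex.mul_conj, Complex.sq_norm]
  have habs : ‖Nm.det‖ ^ 2 = t := by exact_mod_cast hdet
  have hdetN : ‖Nm.det‖ ^ 2 = (∏ i, r i)⁻¹ * ‖M.det‖ ^ 2 := by
    rw [hNm, Matrix.det_mul, Matrix.det_diagonal, norm_mul, mul_pow]
    congr 1
    rw [norm_prod, ← Finset.prod_pow, ← Finset.prod_inv_distrib]
    exact Finset.prod_congr rfl fun i _ => habs_c i
  have hprodpos : 0 < ∏ i, r i := Finset.prod_pos fun i _ => hrpos i
  have hle : (∏ i, r i)⁻¹ * ‖M.det‖ ^ 2 ≤ 1 := hdetN ▸ habs ▸ ht1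
  calc ‖M.det‖ ^ 2
      = (∏ i, r i) * ((∏ i, r i)⁻¹ * ‖M.det‖ ^ 2) := by
        field_simp
    _ ≤ (∏ i, r i) * 1 := mul_le_mul_of_nonneg_left hle hprodpos.le
    _ = ∏ i, ∑ j, ‖M i j‖ ^ 2 := by rw [mul_one]

end Hadamard

/-- the Hadamard-type bound, inequality (3.3) of the paper.
For all `m ≥ 1`, `z₀, b ∈ ℂ`, real diagonal `Λ = diag(λ₁,…,λ_m)` and skew-symmetric
complex `B₂₀, B₀₂`:
`|det F̃| ≤ ∏ j (|z₀|² + λ_j² + |b|²·Σ_k |(B₂₀)_{jk}|²)·(|z₀|² + λ_j² + |b|²·Σ_k |(B₀₂)_{jk}|²)`. -/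
theorem abs_det_Ftilde_le (m : ℕ) (hm : 1 ≤ m) (z₀ b : ℂ)
    (lam : Fin m → ℝ)
    (B20 B02 : Matrix (Fin m) (Fin m) ℂ)
    (hB20 : B20ᵀ = -B20) (hB02 : B02ᵀ = -B02) :
    ‖(Ftilde m z₀ b lam B20 B02).det‖ ≤
      ∏ j, ((‖z₀‖ ^ 2 + lam j ^ 2
              + ‖b‖ ^ 2 * ∑ k, ‖B20 j k‖ ^ 2) *
            (‖z₀‖ ^ 2 + lam j ^ 2
              + ‖b‖ ^ 2 * ∑ k, ‖B02 j k‖ ^ 2)) := by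
  set F := Ftilde m z₀ b lam B20 B02 with hF
  set X : Fin m → ℝ := fun j => ‖z₀‖ ^ 2 + lam j ^ 2
      + ‖b‖ ^ 2 * ∑ k, ‖B20 j k‖ ^ 2 with hX
  set Y : Fin m → ℝ := fun j => ‖z₀‖ ^ 2 + lam j ^ 2
      + ‖b‖ ^ 2 * ∑ k, ‖B02 j k‖ ^ 2 with hY
  have hXnn : ∀ j, 0 ≤ X j := fun j => by
    rw [hX]; positivity
  have hYnn : ∀ j, 0 ≤ Y j := fun j => by
    rw [hY]; positivity
  have hsk20 : ∀ j : Fin m, ∑ k, ‖b‖ ^ 2 * ‖B20 k j‖ ^ 2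
      = ∑ k, ‖b‖ ^ 2 * ‖B20 j k‖ ^ 2 := by
    intro j
    refine Finset.sum_congr rfl fun k _ => ?_
    have : B20 k j = -(B20 j k) := by
      have := congrFun (congrFun hB20 j) k
      simpa [Matrix.transpose_apply, Matrix.neg_apply] using this
    rw [this, norm_neg]
  have hsk02 : ∀ j : Fin m, ∑ k, ‖b‖ ^ 2 * ‖B02 k j‖ ^ 2
      = ∑ k, ‖b‖ ^ 2 * ‖B02 j k‖ ^ 2 := by
    intro j
    refine Finset.sum_congr rfl fun k _ => ?_
    have : B02 k j = -(B02 j k) := by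
      have := congrFun (congrFun hB02 j) k
      simpa [Matrix.transpose_apply, Matrix.neg_apply] using this
    rw [this, norm_neg]
  have hrow1 : ∀ j : Fin m, ∑ k, ‖F (Sum.inl (Sum.inl j)) k‖ ^ 2 = X j := by
    intro j
    rw [Fintype.sum_sum_type]
    simp only [Fintype.sum_sum_type, hF, Ftilde, fromBlocks_apply₁₁, fromBlocks_apply₁₂,
      fromBlocks_apply₂₁, fromBlocks_apply₂₂, Matrix.smul_apply, Matrix.zero_apply,
      Matrix.neg_apply, Matrix.one_apply, Matrix.diagonal_apply, smul_eq_mul, mul_ite,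
      mul_one, mul_zero, map_zero, map_neg_eq_map, _root_.map_mul, norm_zero, norm_neg, norm_mul, mul_pow,
      apply_ite (norm : ℂ → ℝ), apply_ite (· ^ (2:ℕ)), Complex.norm_real, Real.norm_eq_abs]
    simp [Finset.sum_ite_eq, Finset.mul_sum, sq_abs, hX]
    ring
  have hrow2 : ∀ j : Fin m, ∑ k, ‖F (Sum.inl (Sum.inr j)) k‖ ^ 2 = Y j := by
    intro j
    rw [Fintype.sum_sum_type]
    simp only [Fintype.sum_sum_type, hF, Ftilde, fromBlocks_apply₁₁, fromBlocks_apply₁₂,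
      fromBlocks_apply₂₁, fromBlocks_apply₂₂, Matrix.smul_apply, Matrix.zero_apply,
      Matrix.neg_apply, Matrix.one_apply, Matrix.diagonal_apply, Matrix.conjTranspose_apply,
      smul_eq_mul, mul_ite, mul_one, mul_zero, map_zero, map_neg_eq_map, _root_.map_mul, norm_zero, norm_neg, norm_mul,
      mul_pow, apply_ite (norm : ℂ → ℝ), apply_ite (· ^ (2:ℕ)), Complex.norm_real, Real.norm_eq_abs,
      Complex.norm_conj]
    simp [Finset.sum_ite_eq, Finset.mul_sum, sq_abs, hY]
    rw [hsk02 j]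
    ring
  have hrow3 : ∀ j : Fin m, ∑ k, ‖F (Sum.inr (Sum.inl j)) k‖ ^ 2 = X j := by
    intro j
    rw [Fintype.sum_sum_type]
    simp only [Fintype.sum_sum_type, hF, Ftilde, fromBlocks_apply₁₁, fromBlocks_apply₁₂,
      fromBlocks_apply₂₁, fromBlocks_apply₂₂, Matrix.smul_apply, Matrix.zero_apply,
      Matrix.neg_apply, Matrix.one_apply, Matrix.diagonal_apply, Matrix.conjTranspose_apply,
      smul_eq_mul, mul_ite, mul_one, mul_zero, map_zero, map_neg_eq_map, _root_.map_mul, norm_zero, norm_neg, norm_mul,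
      mul_pow, apply_ite (norm : ℂ → ℝ), apply_ite (· ^ (2:ℕ)), Complex.norm_real, Real.norm_eq_abs,
      Complex.norm_conj]
    simp [Finset.sum_ite_eq, Finset.mul_sum, sq_abs, hX]
    rw [hsk20 j]
  have hrow4 : ∀ j : Fin m, ∑ k, ‖F (Sum.inr (Sum.inr j)) k‖ ^ 2 = Y j := by
    intro j
    rw [Fintype.sum_sum_type]
    simp only [Fintype.sum_sum_type, hF, Ftilde, fromBlocks_apply₁₁, fromBlocks_apply₁₂,
      fromBlocks_apply₂₁, fromBlocks_apply₂₂, Matrix.smul_apply, Matrix.zero_apply,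
      Matrix.neg_apply, Matrix.one_apply, Matrix.diagonal_apply, Matrix.conjTranspose_apply,
      smul_eq_mul, mul_ite, mul_one, mul_zero, map_zero, map_neg_eq_map, _root_.map_mul, norm_zero, norm_neg, norm_mul,
      mul_pow, apply_ite (norm : ℂ → ℝ), apply_ite (· ^ (2:ℕ)), Complex.norm_real, Real.norm_eq_abs,
      Complex.norm_conj]
    simp [Finset.sum_ite_eq, Finset.mul_sum, sq_abs, hY]
    ring
  have hprod : (∏ i, ∑ j, ‖F i j‖ ^ 2) = (∏ j, X j * Y j) ^ 2 := by
    rw [Fintype.prod_sum_type]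
    simp only [Fintype.prod_sum_type, hrow1, hrow2, hrow3, hrow4]
    rw [Finset.prod_mul_distrib]
    ring
  have hH := hadamard_sq' F
  rw [hprod] at hH
  have hRnn : 0 ≤ ∏ j, X j * Y j :=
    Finset.prod_nonneg fun j _ => mul_nonneg (hXnn j) (hYnn j)
  calc ‖F.det‖
      = Real.sqrt (‖F.det‖ ^ 2) := (Real.sqrt_sq (norm_nonneg _)).symm
    _ ≤ Real.sqrt ((∏ j, X j * Y j) ^ 2) := Real.sqrt_le_sqrt hH
    _ = ∏ j, X j * Y j := Real.sqrt_sq hRnn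
end

section
/- Let κ, z_0 ∈ ℂ satisfy Condition (i) or Condition (ii). Then d_1(κ) := |1 - |κ|·z_0²|² - |κ|²·(1 - |z_0|²)² > 0. -/
/-- Let `κ, z₀ ∈ ℂ` satisfy Condition (i) (`|κ| < 1` and `|z₀| < 1`) or
Condition (ii) (`|κ| = 1`, `|z₀| < 1` and `z₀ ∉ ℝ`).  Then
`d₁(κ) := |1 - |κ|·z₀²|² - |κ|²·(1 - |z₀|²)² > 0`. -/
theorem d_one_pos (κ z₀ : ℂ)
    (hcond : (‖κ‖ < 1 ∧ ‖z₀‖ < 1) ∨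
      (‖κ‖ = 1 ∧ ‖z₀‖ < 1 ∧ z₀.im ≠ 0)) :
    0 < ‖1 - (‖κ‖ : ℂ) * z₀ ^ 2‖ ^ 2 -
      ‖κ‖ ^ 2 * (1 - ‖z₀‖ ^ 2) ^ 2 := by
  set k := ‖κ‖ with hkdef
  have hk0 : 0 ≤ k := norm_nonneg κ
  have e1 : ‖1 - (k : ℂ) * z₀ ^ 2‖ ^ 2
      = Complex.normSq (1 - (k : ℂ) * z₀ ^ 2) := Complex.sq_norm _
  have e2 : ‖z₀‖ ^ 2 = Complex.normSq z₀ := Complex.sq_norm _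
  rw [e1, e2]
  set x := z₀.re
  set y := z₀.im
  have hns : Complex.normSq z₀ = x ^ 2 + y ^ 2 := by
    simp [Complex.normSq_apply, sq]
    rfl
  have hexp : Complex.normSq (1 - (k : ℂ) * z₀ ^ 2)
      = (1 - k * (x ^ 2 - y ^ 2)) ^ 2 + (k * (2 * x * y)) ^ 2 := by
    simp [Complex.normSq_apply, Complex.sub_re, Complex.sub_im, Complex.mul_re,
      Complex.mul_im, pow_two]
    ring
  rw [hexp, hns]
  rcases hcond with ⟨h1, h2⟩ | ⟨h1, h2, h3⟩
  · have hA : x ^ 2 + y ^ 2 < 1 := by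
      have := Complex.sq_norm z₀
      nlinarith [norm_nonneg z₀]
    nlinarith [sq_nonneg y, sq_nonneg x, mul_nonneg hk0 (sq_nonneg y),
      mul_pos (by linarith : (0:ℝ) < 1 - k)
        (by nlinarith : (0:ℝ) < 1 + k - 2 * k * (x ^ 2 + y ^ 2)),
      sq_nonneg (x * y)]
  · rw [h1]
    have hy : 0 < y ^ 2 := pow_pos (abs_pos.mpr h3) 2 |>.trans_le (by rw [sq_abs])
    nlinarith [sq_nonneg (x * y)]
end

section
/- Let a ∈ ℂ and t ∈ ℝ satisfy Re(a) > |t|. Then the function (q_1,q_2) ↦ exp( -a|q_1|² - conj(a)|q_2|² - t(q_1 q_2 + conj(q_1 q_2)) ) is absolutely integrable on ℂ², and ∫_{ℂ²} exp( -a|q_1|² - conj(a)|q_2|² - t(q_1 q_2 + conj(q_1 q_2)) ) dA(q_1) dA(q_2) = π² / ( |a|² - t² ). -/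
open MeasureTheory Complex Real

set_option maxHeartbeats 1000000 in
/-- Let `a ∈ ℂ` and `t ∈ ℝ` satisfy `Re a > |t|`.  Then the function
`(q₁,q₂) ↦ exp( -a|q₁|² - conj(a)|q₂|² - t(q₁q₂ + conj(q₁q₂)) )` is absolutely integrable
on `ℂ²` and its integral (w.r.t. Lebesgue measure on `ℂ² ≅ ℝ⁴`) equals `π²/(|a|² - t²)`. -/
theorem gaussian_integral_complex_pair (a : ℂ) (t : ℝ) (h : |t| < a.re) :
    Integrable (fun q : ℂ × ℂ =>
        Complex.exp (-a * ‖q.1‖ ^ 2 - (starRingEnd ℂ) a * ‖q.2‖ ^ 2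
          - (t : ℂ) * (q.1 * q.2 + (starRingEnd ℂ) (q.1 * q.2)))) volume ∧
    ∫ q : ℂ × ℂ,
        Complex.exp (-a * ‖q.1‖ ^ 2 - (starRingEnd ℂ) a * ‖q.2‖ ^ 2
          - (t : ℂ) * (q.1 * q.2 + (starRingEnd ℂ) (q.1 * q.2)))
      = ((Real.pi ^ 2 / (‖a‖ ^ 2 - t ^ 2) : ℝ) : ℂ) := by
  have ha : 0 < a.re := lt_of_le_of_lt (abs_nonneg t) h
  have ha0 : a ≠ 0 := fun h0 => by simp [h0] at ha
  have hca : (starRingEnd ℂ) a ≠ 0 := by simpa using ha0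
  have hs : 0 < Complex.normSq a - t ^ 2 := by
    have h1 : t ^ 2 < a.re ^ 2 := by nlinarith [abs_nonneg t, _root_.sq_abs t]
    have h2 : a.re ^ 2 ≤ Complex.normSq a := by
      rw [Complex.normSq_apply]; nlinarith [sq_nonneg a.im]
    linarith
  -- the key pointwise rewriting of the exponent
  have key : ∀ q₁ q₂ : ℂ,
      (-a * ‖q₁‖ ^ 2 - (starRingEnd ℂ) a * ‖q₂‖ ^ 2
          - (t : ℂ) * (q₁ * q₂ + (starRingEnd ℂ) (q₁ * q₂)))
        = (-(starRingEnd ℂ) a * (‖q₂‖ : ℂ) ^ 2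
            + ((-2 * t : ℝ) : ℂ) * ((inner ℝ ((starRingEnd ℂ) q₁) q₂ : ℝ)))
          + (-a * (‖q₁‖ : ℂ) ^ 2) := by
    intro q₁ q₂
    rw [Complex.add_conj]
    have h3 : ((inner ℝ ((starRingEnd ℂ) q₁) q₂ : ℝ)) = (q₁ * q₂).re := by
      simp
      ring
    rw [h3]
    push_cast
    ring
  have hb2 : (0 : ℝ) < (a - (t : ℂ) ^ 2 / (starRingEnd ℂ) a).re := by
    have : a - (t : ℂ) ^ 2 / (starRingEnd ℂ) a
        = ((Complex.normSq a - t ^ 2 : ℝ) : ℂ) / (starRingEnd ℂ) a := by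
      field_simp
      push_cast
      linear_combination Complex.mul_conj a
    rw [this, Complex.div_re]
    have : Complex.normSq ((starRingEnd ℂ) a) = Complex.normSq a := by simp
    simp only [Complex.ofReal_re, Complex.ofReal_im, Complex.conj_re, Complex.conj_im, this,
      zero_mul, zero_div, add_zero]
    have hn : 0 < Complex.normSq a := Complex.normSq_pos.mpr ha0
    positivity
  -- Integrability
  have hf : Integrable (fun q : ℂ × ℂ =>
      Complex.exp (-a * ‖q.1‖ ^ 2 - (starRingEnd ℂ) a * ‖q.2‖ ^ 2
        - (t : ℂ) * (q.1 * q.2 + (starRingEnd ℂ) (q.1 * q.2)))) volume := by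
    set ε : ℝ := a.re - |t| with hε
    have hεpos : 0 < ε := by simp [hε]; linarith
    have hg : Integrable (fun z : ℂ => rexp (-ε * ‖z‖ ^ 2)) volume := by
      have := (GaussianFourier.integrable_cexp_neg_mul_sq_norm_add
        (b := (ε : ℂ)) (by simpa using hεpos) 0 (0 : ℂ)).norm
      refine this.congr (Filter.Eventually.of_forall fun z => ?_)
      simp [Complex.norm_exp, ← Complex.ofReal_pow]
    have hgg : Integrable (fun q : ℂ × ℂ => rexp (-ε * ‖q.1‖ ^ 2) * rexp (-ε * ‖q.2‖ ^ 2))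
        volume := by
      rw [MeasureTheory.Measure.volume_eq_prod]
      exact hg.mul_prod hg
    refine hgg.mono ?_ (Filter.Eventually.of_forall fun q => ?_)
    · apply Continuous.aestronglyMeasurable
      continuity
    · rw [Complex.norm_exp]
      have hre : (-a * ‖q.1‖ ^ 2 - (starRingEnd ℂ) a * ‖q.2‖ ^ 2
          - (t : ℂ) * (q.1 * q.2 + (starRingEnd ℂ) (q.1 * q.2))).re
          = -a.re * ‖q.1‖ ^ 2 - a.re * ‖q.2‖ ^ 2
            - t * (2 * (q.1 * q.2).re) := by
        rw [key]
        simp [← Complex.ofReal_pow]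
        ring
      rw [hre]
      have hR : |(q.1 * q.2).re| ≤ ‖q.1‖ * ‖q.2‖ := by
        calc |(q.1 * q.2).re| ≤ ‖q.1 * q.2‖ := Complex.abs_re_le_norm _
        _ = ‖q.1‖ * ‖q.2‖ := norm_mul _ _
      rw [norm_of_nonneg (by positivity), ← Real.exp_add]
      apply Real.exp_le_exp.mpr
      have h1 : t * (2 * (q.1 * q.2).re) ≥ -(|t| * (2 * (‖q.1‖ * ‖q.2‖))) := by
        have := neg_abs_le (t * (2 * (q.1 * q.2).re))
        have h2 : |t * (2 * (q.1 * q.2).re)| ≤ |t| * (2 * (‖q.1‖ * ‖q.2‖)) := by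
          rw [abs_mul, abs_mul, _root_.abs_two]
          gcongr
        linarith
      rw [hε]
      nlinarith [h1, mul_nonneg (abs_nonneg t) (sq_nonneg (‖q.1‖ - ‖q.2‖))]
  refine ⟨hf, ?_⟩
  rw [MeasureTheory.Measure.volume_eq_prod] at hf ⊢
  rw [MeasureTheory.integral_prod _ hf]
  have step1 : ∀ q₁ : ℂ,
      (∫ q₂ : ℂ, Complex.exp (-a * ‖q₁‖ ^ 2 - (starRingEnd ℂ) a * ‖q₂‖ ^ 2
        - (t : ℂ) * (q₁ * q₂ + (starRingEnd ℂ) (q₁ * q₂))))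
      = (↑π / (starRingEnd ℂ) a)
          * Complex.exp (-(a - (t : ℂ) ^ 2 / (starRingEnd ℂ) a) * (‖q₁‖ : ℂ) ^ 2) := by
    intro q₁
    have : ∀ q₂ : ℂ, Complex.exp (-a * ‖q₁‖ ^ 2
        - (starRingEnd ℂ) a * ‖q₂‖ ^ 2
        - (t : ℂ) * (q₁ * q₂ + (starRingEnd ℂ) (q₁ * q₂)))
        = Complex.exp (-(starRingEnd ℂ) a * (‖q₂‖ : ℂ) ^ 2
            + ((-2 * t : ℝ) : ℂ) * ((inner ℝ ((starRingEnd ℂ) q₁) q₂ : ℝ)))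
          * Complex.exp (-a * (‖q₁‖ : ℂ) ^ 2) := by
      intro q₂; rw [← Complex.exp_add, key q₁ q₂]
    simp_rw [this]
    rw [MeasureTheory.integral_mul_const]
    rw [GaussianFourier.integral_cexp_neg_mul_sq_norm_add (by simpa using ha) _ _]
    rw [Complex.finrank_real_complex]
    norm_num
    rw [mul_assoc, ← Complex.exp_add]
    congr 1
    field_simp
    ring
  simp_rw [step1]
  rw [MeasureTheory.integral_const_mul]
  rw [GaussianFourier.integral_cexp_neg_mul_sq_norm hb2]
  rw [Complex.finrank_real_complex]
  norm_num
  have hprod : (starRingEnd ℂ) a * (a - (t : ℂ) ^ 2 / (starRingEnd ℂ) a)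
      = ((‖a‖ : ℝ) : ℂ) ^ 2 - ((t : ℝ) : ℂ) ^ 2 := by
    rw [mul_sub, mul_div_cancel₀ _ hca, mul_comm, Complex.mul_conj, ← Complex.sq_norm]
    push_cast
    ring
  rw [div_mul_div_comm, hprod, ← sq]
end
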